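/- If I is a boring ideal on ω (I contains an isomorphic copy of BI), then every Hausdorff space in FinBW(I) is boring. -/

import Mathlib

open Set Filter Topology

/-- The ideal `Fin ⊗ Fin` on `ω²`: sets all but finitely many of whose
vertical sections are finite. -/
def FinFin : Set (Set (ℕ × ℕ)) :=
  {A | {n : ℕ | ¬ ({m : ℕ | (n, m) ∈ A}).Finite}.Finite}

/-- The `i`-th section of a subset of `ω³`. -/
def BIsec (i : ℕ) (A : Set (ℕ × ℕ × ℕ)) : Set (ℕ × ℕ) := {p | (i, p) ∈ A}

/-- The ideal `BI` on `ω³`. -/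
def BI : Set (Set (ℕ × ℕ × ℕ)) :=
  {A | ∃ k : ℕ, (∀ i < k, BIsec i A ∈ FinFin) ∧ ∀ i ≥ k, (BIsec i A).Finite}

/-- `I` is an ideal on `X`: contains all finite sets, closed under subsets and
finite unions, and proper. -/
def IsIdeal {X : Type*} (I : Set (Set X)) : Prop :=
  (∀ A : Set X, A.Finite → A ∈ I) ∧
  (∀ A B : Set X, A ∈ I → B ⊆ A → B ∈ I) ∧
  (∀ A B : Set X, A ∈ I → B ∈ I → A ∪ B ∈ I) ∧
  (Set.univ : Set X) ∉ I

/-- A Hausdorff space is *boring* if it is sequentially compact and some finite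
set receives the limits of all injective convergent sequences. -/
def Boring (X : Type*) [TopologicalSpace X] : Prop :=
  SeqCompactSpace X ∧ ∃ F : Finset X, ∀ (x : ℕ → X) (l : X),
    Function.Injective x → Filter.Tendsto x Filter.atTop (nhds l) → l ∈ F

/-- The sequence `(x n)_{n ∈ A}` converges to `l`. -/
def ConvAlong {X : Type*} [TopologicalSpace X] (A : Set ℕ) (x : ℕ → X) (l : X) : Prop :=
  ∀ U ∈ nhds l, {n ∈ A | x n ∉ U}.Finite

/-- `X ∈ FinBW(I)`: every sequence converges along some `I`-positive index set. -/
def FinBW (I : Set (Set ℕ)) (X : Type*) [TopologicalSpace X] : Prop :=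
  ∀ x : ℕ → X, ∃ A : Set ℕ, A ∉ I ∧ ∃ l : X, ConvAlong A x l

lemma tendsto_fin_escape {X : Type*} [TopologicalSpace X] {g : ℕ → X} {b : X}
    (h : Tendsto g atTop (𝓝 b)) {V : Set X} (hV : V ∈ 𝓝 b) :
    {n | g n ∉ V}.Finite := by
  have := h hV
  rw [Filter.mem_map, Filter.mem_atTop_sets] at this
  obtain ⟨N, hN⟩ := this
  exact (Set.finite_Iio N).subset (fun n hn => by
    by_contra h'
    exact hn (hN n (not_lt.mp h')))

lemma almost_disjoint_ranges {X : Type*} [TopologicalSpace X] [T2Space X]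
    {y z : ℕ → X} {a b : X} (ha : Tendsto y atTop (𝓝 a)) (hb : Tendsto z atTop (𝓝 b))
    (hab : a ≠ b) : (range y ∩ range z).Finite := by
  obtain ⟨U, V, hUo, hVo, haU, hbV, hUV⟩ := t2_separation hab
  have h1 : {n | y n ∉ U}.Finite := tendsto_fin_escape ha (hUo.mem_nhds haU)
  have h2 : {n | z n ∉ V}.Finite := tendsto_fin_escape hb (hVo.mem_nhds hbV)
  apply ((h1.image y).union (h2.image z)).subset
  rintro p ⟨⟨n, rfl⟩, ⟨m, hm⟩⟩
  by_cases hU : y n ∈ U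
  · right
    exact ⟨m, by simpa using fun hVmem => Set.disjoint_left.1 hUV hU (hm ▸ hVmem), hm⟩
  · left
    exact ⟨n, hU, rfl⟩

lemma exists_disjoint_limits {X : Type*} [TopologicalSpace X] [T2Space X]
    (hF : ∀ F : Finset X, ∃ (x : ℕ → X) (l : X),
      Function.Injective x ∧ Tendsto x atTop (𝓝 l) ∧ l ∉ F) :
    ∃ (L : ℕ → X) (z : ℕ → ℕ → X),
      (∀ i j, i ≠ j → L i ≠ L j) ∧
      (∀ i, Function.Injective (z i)) ∧
      (∀ i, Tendsto (z i) atTop (𝓝 (L i))) ∧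
      (∀ i j n m, i < j → z i n ≠ z j m) := by
  classical
  choose ys ls hinj htend hnot using hF
  let Fs : ℕ → Finset X := fun k =>
    Nat.rec (∅ : Finset X) (fun _ Fk => insert (ls Fk) Fk) k
  let L : ℕ → X := fun k => ls (Fs k)
  let Y : ℕ → ℕ → X := fun k => ys (Fs k)
  have hYinj : ∀ k, Function.Injective (Y k) := fun k => hinj (Fs k)
  have hYtend : ∀ k, Tendsto (Y k) atTop (𝓝 (L k)) := fun k => htend (Fs k)
  have hFs_mono : Monotone Fs :=
    monotone_nat_of_le_succ (fun k => Finset.subset_insert _ _)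
  have hLmem : ∀ j k, j < k → L j ∈ Fs k := by
    intro j k h
    exact hFs_mono h (Finset.mem_insert_self _ _)
  have hLlt : ∀ j k, j < k → L j ≠ L k := by
    intro j k h heq
    have := hLmem j k h
    rw [heq] at this
    exact hnot (Fs k) this
  have hLne : ∀ i j, i ≠ j → L i ≠ L j := by
    intro i j hij
    rcases lt_or_gt_of_ne hij with h | h
    · exact hLlt i j h
    · exact fun heq => hLlt j i h heq.symm
  let D : ℕ → Set X := fun i => range (Y i) \ ⋃ j ∈ Finset.range i, range (Y j)
  have hDinf : ∀ i, (D i).Infinite := by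
    intro i
    have h1 : (range (Y i)).Infinite := Set.infinite_range_of_injective (hYinj i)
    have h2 : (range (Y i) ∩ ⋃ j ∈ Finset.range i, range (Y j)).Finite := by
      rw [Set.inter_iUnion₂]
      apply Set.Finite.biUnion (Finset.range i).finite_toSet
      intro j hj
      exact almost_disjoint_ranges (hYtend i) (hYtend j)
        (hLne i j (by simp at hj; omega))
    have := h1.diff h2
    rwa [Set.diff_self_inter] at this
  have hNinf : ∀ i, (setOf (· ∈ Y i ⁻¹' D i)).Infinite := by
    intro i
    exact (hDinf i).preimage Set.diff_subset
  let z : ℕ → ℕ → X := fun i => Y i ∘ Nat.nth (· ∈ Y i ⁻¹' D i)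
  have hzD : ∀ i n, z i n ∈ D i := fun i n => Nat.nth_mem_of_infinite (hNinf i) n
  refine ⟨L, z, hLne, fun i => (hYinj i).comp (Nat.nth_injective (hNinf i)),
    fun i => (hYtend i).comp ((Nat.nth_strictMono (hNinf i)).tendsto_atTop), ?_⟩
  intro i j n m hij heq
  have h1 : z i n ∈ range (Y i) := (hzD i n).1
  exact (hzD j m).2 (Set.mem_biUnion (Finset.mem_range.mpr hij) (heq ▸ h1))

lemma subseq_of_convAlong {X : Type*} [TopologicalSpace X] {A : Set ℕ} (hA : A.Infinite)
    {x : ℕ → X} {l : X} (hconv : ConvAlong A x l) :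
    ∃ φ : ℕ → ℕ, StrictMono φ ∧ Tendsto (x ∘ φ) atTop (𝓝 l) := by
  have hA' : (setOf (· ∈ A)).Infinite := hA
  refine ⟨Nat.nth (· ∈ A), Nat.nth_strictMono hA', ?_⟩
  intro U hU
  rw [Filter.mem_map]
  have hfin : {k | x (Nat.nth (· ∈ A) k) ∉ U}.Finite := by
    apply ((hconv U hU).preimage ((Nat.nth_injective hA').injOn)).subset
    intro k hk
    exact ⟨Nat.nth_mem_of_infinite hA' k, hk⟩
  rw [Filter.mem_atTop_sets]
  rcases hfin.bddAbove with ⟨N, hN⟩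
  exact ⟨N + 1, fun n hn => by
    by_contra h'
    exact absurd (hN h') (by omega)⟩

theorem stmt_17 (I : Set (Set ℕ)) (hI : IsIdeal I)
    (hbor : ∃ f : ℕ → ℕ × ℕ × ℕ, Function.Bijective f ∧ ∀ A ∈ BI, f ⁻¹' A ∈ I)
    (X : Type*) [TopologicalSpace X] [T2Space X] (hX : FinBW I X) :
    Boring X := by
  classical
  obtain ⟨f, hfbij, hfI⟩ := hbor
  constructor
  · refine ⟨fun {x} _ => ?_⟩
    obtain ⟨A, hA, l, hconv⟩ := hX x
    have hAinf : A.Infinite := fun h => hA (hI.1 A h)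
    obtain ⟨φ, hφ, ht⟩ := subseq_of_convAlong hAinf hconv
    exact ⟨l, mem_univ l, φ, hφ, ht⟩
  · by_contra hF
    push_neg at hF
    obtain ⟨L, z, hLne, hzinj, hztend, zdisj⟩ := exists_disjoint_limits hF
    set w : ℕ × ℕ × ℕ → X := fun p => z p.1 p.2.1 with hw
    obtain ⟨B, hB, l, hconv⟩ := hX (fun n => w (f n))
    set C : Set (ℕ × ℕ × ℕ) := f '' B with hCdef
    have hC : C ∉ BI := fun h =>
      hB (by simpa [hCdef, Set.preimage_image_eq B hfbij.1] using hfI C h)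
    have hCfin : ∀ U ∈ 𝓝 l, {p | p ∈ C ∧ w p ∉ U}.Finite := by
      intro U hU
      apply ((hconv U hU).image f).subset
      rintro p ⟨⟨n, hnB, rfl⟩, hwp⟩
      exact ⟨n, ⟨hnB, hwp⟩, rfl⟩
    have fiberA : ∀ i n, {m | (i, n, m) ∈ C}.Infinite → z i n = l := by
      intro i n hm
      by_contra hne
      have hU : ({z i n}ᶜ : Set X) ∈ 𝓝 l := compl_singleton_mem_nhds (Ne.symm hne)
      refine hm ?_
      apply ((hCfin _ hU).preimage (f := fun m : ℕ => (i, n, m)) ?_).subset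
      · intro m hmC
        exact ⟨hmC, by simp [hw]⟩
      · intro a _ b _ h
        simpa using h
    have projB : ∀ i, {n | ∃ m, (i, n, m) ∈ C}.Infinite → l = L i := by
      intro i hP
      by_contra hne
      obtain ⟨U, V, hUo, hVo, hlU, hLiV, hUV⟩ := t2_separation hne
      have hfin := hCfin U (hUo.mem_nhds hlU)
      have hT : {n | (∃ m, (i, n, m) ∈ C) ∧ z i n ∉ U}.Finite := by
        apply (hfin.image (fun p : ℕ × ℕ × ℕ => p.2.1)).subset
        rintro n ⟨⟨m, hm⟩, hz⟩
        exact ⟨(i, n, m), ⟨hm, hz⟩, rfl⟩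
      have hV' : {n | z i n ∉ V}.Finite :=
        tendsto_fin_escape (hztend i) (hVo.mem_nhds hLiV)
      obtain ⟨n, hnP, hnbad⟩ := (hP.diff (hT.union hV')).nonempty
      simp only [Set.mem_union, Set.mem_setOf_eq, not_or] at hnbad
      obtain ⟨h1, h2⟩ := hnbad
      push_neg at h1 h2
      exact Set.disjoint_left.1 hUV (h1 hnP) h2
    have secCase : ∀ i, (BIsec i C).Infinite →
        {n | ∃ m, (i, n, m) ∈ C}.Infinite ∨ ∃ n, {m | (i, n, m) ∈ C}.Infinite := by
      intro i hsec
      by_contra h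
      push_neg at h
      obtain ⟨hP, hfib⟩ := h
      refine hsec ?_
      apply (hP.prod (hP.biUnion (fun n _ => (hfib n)))).subset
      rintro ⟨n, m⟩ hnm
      exact ⟨⟨m, hnm⟩, Set.mem_biUnion ⟨m, hnm⟩ hnm⟩
    have dich : ∀ i, (BIsec i C).Infinite → l = L i ∨ ∃ n, z i n = l := by
      intro i hsec
      rcases secCase i hsec with h | ⟨n, hn⟩
      · exact Or.inl (projB i h)
      · exact Or.inr ⟨n, fiberA i n hn⟩
    by_cases hall : ∀ i, BIsec i C ∈ FinFin
    · have hub : ∀ k, ∃ i, k ≤ i ∧ (BIsec i C).Infinite := by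
        intro k
        by_contra h
        push_neg at h
        exact hC ⟨k, fun i _ => hall i, fun i hi => (h i hi)⟩
      obtain ⟨i1, _, hs1⟩ := hub 0
      obtain ⟨i2, hi2, hs2⟩ := hub (i1 + 1)
      obtain ⟨i3, hi3, hs3⟩ := hub (i2 + 1)
      have h12 : i1 < i2 := by omega
      have h23 : i2 < i3 := by omega
      have h13 : i1 < i3 := by omega
      rcases dich i1 hs1 with d1 | ⟨n1, d1⟩ <;> rcases dich i2 hs2 with d2 | ⟨n2, d2⟩ <;>
        rcases dich i3 hs3 with d3 | ⟨n3, d3⟩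
      · exact hLne i1 i2 (by omega) (d1.symm.trans d2)
      · exact hLne i1 i2 (by omega) (d1.symm.trans d2)
      · exact hLne i1 i3 (by omega) (d1.symm.trans d3)
      · exact zdisj i2 i3 n2 n3 h23 (d2.trans d3.symm)
      · exact hLne i2 i3 (by omega) (d2.symm.trans d3)
      · exact zdisj i1 i3 n1 n3 h13 (d1.trans d3.symm)
      · exact zdisj i1 i2 n1 n2 h12 (d1.trans d2.symm)
      · exact zdisj i1 i2 n1 n2 h12 (d1.trans d2.symm)
    · push_neg at hall
      obtain ⟨i, hi⟩ := hall
      simp only [FinFin, Set.mem_setOf_eq] at hi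
      have hQ : {n | ¬ ({m | (n, m) ∈ BIsec i C}).Finite}.Infinite := hi
      obtain ⟨n1, hn1⟩ := hQ.nonempty
      obtain ⟨n2, hn2, hn2'⟩ := (hQ.diff (Set.finite_singleton n1)).nonempty
      have e1 : z i n1 = l := fiberA i n1 hn1
      have e2 : z i n2 = l := fiberA i n2 hn2
      exact hn2' (hzinj i (e2.trans e1.symm))
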